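/- Let V ⊆ H be a subspace of a finite-dimensional complex Hilbert space H = H_1 ⊗ ⋯ ⊗ H_n spanned by computational-basis vectors, and suppose V can be written as a direct sum ⊕_k X_k with each X_k also spanned by basis vectors. Then for two commuting basis-diagonal subspaces V_i = ⊕_k X_{ijk} and V_j = ⊕_k X_{jik} such that X_{ijk} and X_{jik} are relatively independent inside the slice Y_{ijk} (i.e., R(X_{ijk} ∩ X_{jik} | Y_{ijk}) = R(X_{ijk}|Y_{ijk})·R(X_{jik}|Y_{ijk})) and the Y_{ijk} are orthogonal with ⊕_k Y_{ijk} = H, we have R(V_i ∩ V_j) ≥ (Σ_k min{R(X_{ijk}), R(X_{jik})})². -/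

import Mathlib

open Module Finset

lemma finrank_finset_sup_of_independent {H : Type*} [NormedAddCommGroup H]
    [InnerProductSpace ℂ H] [FiniteDimensional ℂ H] {K : ℕ}
    (X : Fin K → Submodule ℂ H) (hind : iSupIndep X) (s : Finset (Fin K)) :
    finrank ℂ ↥(s.sup X) = ∑ k ∈ s, finrank ℂ ↥(X k) := by
  classical
  induction s using Finset.induction with
  | empty => simp
  | @insert a s ha ih =>
    rw [Finset.sup_insert, Finset.sum_insert ha, ← ih]
    have hdisj : Disjoint (X a) (s.sup X) := by
      refine (hind a).mono_right ?_
      refine Finset.sup_le fun k hk => ?_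
      exact le_iSup₂ (f := fun k (_ : k ≠ a) => X k) k (by rintro rfl; exact ha hk)
    have h := Submodule.finrank_sup_add_finrank_inf_eq (X a) (s.sup X)
    rw [hdisj.eq_bot] at h
    simp only [finrank_bot, add_zero] at h
    omega

theorem relDim_inter_ge_sq_sum_min {H : Type*} [NormedAddCommGroup H]
    [InnerProductSpace ℂ H] [FiniteDimensional ℂ H] (hH : 0 < finrank ℂ H)
    {K : ℕ} (Y X X' : Fin K → Submodule ℂ H)
    (hXY : ∀ k, X k ≤ Y k) (hX'Y : ∀ k, X' k ≤ Y k)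
    -- the slices Y k are pairwise orthogonal and span H
    (horth : ∀ k l, k ≠ l → ∀ v ∈ Y k, ∀ w ∈ Y l, (inner ℂ v w : ℂ) = 0)
    (hsup : (⨆ k, Y k) = ⊤)
    (hYpos : ∀ k, 0 < finrank ℂ (Y k))
    -- inside each slice, X k and X' k are relatively independent:
    -- R(X k ⊓ X' k | Y k) = R(X k | Y k) · R(X' k | Y k)
    (hindep : ∀ k, (finrank ℂ ↥(X k ⊓ X' k) : ℝ) * finrank ℂ (Y k)
      = (finrank ℂ (X k) : ℝ) * finrank ℂ (X' k)) :
    (∑ k, min ((finrank ℂ (X k) : ℝ) / finrank ℂ H)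
        ((finrank ℂ (X' k) : ℝ) / finrank ℂ H)) ^ 2
      ≤ (finrank ℂ ↥((⨆ k, X k) ⊓ (⨆ k, X' k)) : ℝ) / finrank ℂ H := by
  classical
  -- independence of the Y family
  have hYind : iSupIndep Y := by
    have : OrthogonalFamily ℂ (fun k => Y k) fun k => (Y k).subtypeₗᵢ := by
      intro k l hkl u w
      exact horth k l hkl u u.2 w w.2
    exact this.independent
  have hZY : ∀ k, X k ⊓ X' k ≤ Y k := fun k => le_trans inf_le_left (hXY k)
  have hZind : iSupIndep (fun k => X k ⊓ X' k) := hYind.mono hZY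
  -- dim H = ∑ dim (Y k)
  have hdimH : (finrank ℂ H : ℝ) = ∑ k, (finrank ℂ (Y k) : ℝ) := by
    have := finrank_finset_sup_of_independent Y hYind Finset.univ
    rw [Finset.sup_univ_eq_iSup, hsup, finrank_top] at this
    exact_mod_cast this
  -- lower bound on the intersection
  have hle : (⨆ k, X k ⊓ X' k) ≤ (⨆ k, X k) ⊓ (⨆ k, X' k) :=
    iSup_le fun k => le_inf (le_trans inf_le_left (le_iSup X k))
      (le_trans inf_le_right (le_iSup X' k))
  have hlow : (∑ k, (finrank ℂ ↥(X k ⊓ X' k) : ℝ))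
      ≤ (finrank ℂ ↥((⨆ k, X k) ⊓ (⨆ k, X' k)) : ℝ) := by
    have h1 := finrank_finset_sup_of_independent (fun k => X k ⊓ X' k) hZind Finset.univ
    rw [Finset.sup_univ_eq_iSup] at h1
    have h2 : finrank ℂ ↥(⨆ k, X k ⊓ X' k)
        ≤ finrank ℂ ↥((⨆ k, X k) ⊓ (⨆ k, X' k)) :=
      Submodule.finrank_mono hle
    rw [h1] at h2
    exact_mod_cast h2
  set dH : ℝ := (finrank ℂ H : ℝ) with hdH
  have hdHpos : (0 : ℝ) < dH := by rw [hdH]; exact_mod_cast hH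
  -- abbreviations
  set m : Fin K → ℝ := fun k => min ((finrank ℂ (X k) : ℝ)) ((finrank ℂ (X' k) : ℝ)) with hm
  have hmnonneg : ∀ k, 0 ≤ m k := fun k => le_min (by positivity) (by positivity)
  have hminrw : ∀ k, min ((finrank ℂ (X k) : ℝ) / dH) ((finrank ℂ (X' k) : ℝ) / dH)
      = m k / dH := fun k => min_div_div_right hdHpos.le _ _
  -- key pointwise bound : m k ^ 2 / (dim Y k) ≤ dim (X k ⊓ X' k)
  have hkey : ∀ k, m k ^ 2 / (finrank ℂ (Y k) : ℝ) ≤ (finrank ℂ ↥(X k ⊓ X' k) : ℝ) := by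
    intro k
    have hy : (0 : ℝ) < (finrank ℂ (Y k) : ℝ) := by exact_mod_cast hYpos k
    rw [div_le_iff₀ hy, hindep k]
    have h1 : m k ≤ (finrank ℂ (X k) : ℝ) := min_le_left _ _
    have h2 : m k ≤ (finrank ℂ (X' k) : ℝ) := min_le_right _ _
    nlinarith [hmnonneg k]
  -- Cauchy–Schwarz : (∑ m k)^2 ≤ (∑ m k ^2 / y k) * (∑ y k)
  have hCS : (∑ k, m k) ^ 2
      ≤ (∑ k, m k ^ 2 / (finrank ℂ (Y k) : ℝ)) * dH := by
    have h := Finset.sum_mul_sq_le_sq_mul_sq Finset.univ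
      (fun k => m k / Real.sqrt (finrank ℂ (Y k) : ℝ))
      (fun k => Real.sqrt (finrank ℂ (Y k) : ℝ))
    have hy : ∀ k, (0 : ℝ) < (finrank ℂ (Y k) : ℝ) := fun k => by exact_mod_cast hYpos k
    have e1 : ∀ k, m k / Real.sqrt (finrank ℂ (Y k) : ℝ) * Real.sqrt (finrank ℂ (Y k) : ℝ)
        = m k := fun k => div_mul_cancel₀ _ (Real.sqrt_pos.mpr (hy k)).ne'
    have e2 : ∀ k, (m k / Real.sqrt (finrank ℂ (Y k) : ℝ)) ^ 2
        = m k ^ 2 / (finrank ℂ (Y k) : ℝ) := fun k => by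
      rw [div_pow, Real.sq_sqrt (hy k).le]
    have e3 : ∀ k, (Real.sqrt (finrank ℂ (Y k) : ℝ)) ^ 2 = (finrank ℂ (Y k) : ℝ) :=
      fun k => Real.sq_sqrt (hy k).le
    simp only [e1, e2, e3] at h
    rw [hdimH]
    exact h
  -- put it together
  rw [Finset.sum_congr rfl (fun k _ => hminrw k), ← Finset.sum_div, div_pow,
    div_le_div_iff₀ (by positivity) hdHpos]
  calc (∑ k, m k) ^ 2 * dH ≤ ((∑ k, m k ^ 2 / (finrank ℂ (Y k) : ℝ)) * dH) * dH := by
        have := hCS; nlinarith [hdHpos]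
    _ ≤ (finrank ℂ ↥((⨆ k, X k) ⊓ (⨆ k, X' k)) : ℝ) * dH ^ 2 := by
        have hsum : (∑ k, m k ^ 2 / (finrank ℂ (Y k) : ℝ))
            ≤ (finrank ℂ ↥((⨆ k, X k) ⊓ (⨆ k, X' k)) : ℝ) :=
          le_trans (Finset.sum_le_sum fun k _ => hkey k) hlow
        nlinarith [hdHpos, hsum]
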